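/- For every nonnegative integer d, the value p_d(-1/4) = P_{d,d}(-1/4) equals (3/4)^d \prod_{k=1}^{d} (9k^2 - 1)/(k(2k+1)); in particular P_{d,d}(-1/4) \neq 0. -/

import Mathlib

/-- The multinomial coefficient `(a+b+c)! / (a! b! c!)`. -/
def mult3 (a b c : ℕ) : ℕ := (a + b + c).factorial / (a.factorial * b.factorial * c.factorial)

lemma mult3_eq (a b c : ℕ) : mult3 a b c = (a+b+c).choose a * (b+c).choose b := by
  have h1 : (b+c).choose b * b.factorial * c.factorial = (b+c).factorial := by
    have := Nat.choose_mul_factorial_mul_factorial (show b ≤ b + c by omega)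
    simpa using this
  have h2 : (a+b+c).choose a * a.factorial * (b+c).factorial = (a+b+c).factorial := by
    have := Nat.choose_mul_factorial_mul_factorial (show a ≤ a + b + c by omega)
    have e : a + b + c - a = b + c := by omega
    rw [e] at this; exact this
  unfold mult3
  rw [Nat.div_eq_of_eq_mul_left]
  · positivity
  · rw [← h2, ← h1]; ring

lemma fact_dvd (a b c : ℕ) : a.factorial * b.factorial * c.factorial ∣ (a+b+c).factorial := by
  have h1 : (b+c).choose b * b.factorial * c.factorial = (b+c).factorial := by
    have := Nat.choose_mul_factorial_mul_factorial (show b ≤ b + c by omega)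
    simpa using this
  have h2 : (a+b+c).choose a * a.factorial * (b+c).factorial = (a+b+c).factorial := by
    have := Nat.choose_mul_factorial_mul_factorial (show a ≤ a + b + c by omega)
    have e : a + b + c - a = b + c := by omega
    rw [e] at this; exact this
  exact ⟨(a+b+c).choose a * (b+c).choose b, by rw [← h2, ← h1]; ring⟩

lemma mult3_cast (a b c : ℕ) :
    (mult3 a b c : ℚ) = (a+b+c).factorial / (a.factorial * b.factorial * c.factorial) := by
  rw [mult3, Nat.cast_div (fact_dvd a b c) (by positivity)]
  push_cast; ring

lemma mult3_pascal (a b c : ℕ) :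
    mult3 (a+1) (b+1) (c+1) =
      mult3 a (b+1) (c+1) + mult3 (a+1) b (c+1) + mult3 (a+1) (b+1) c := by
  have : ((mult3 (a+1) (b+1) (c+1) : ℕ) : ℚ) = ((mult3 a (b+1) (c+1) + mult3 (a+1) b (c+1) + mult3 (a+1) (b+1) c : ℕ) : ℚ) → mult3 (a+1) (b+1) (c+1) = mult3 a (b+1) (c+1) + mult3 (a+1) b (c+1) + mult3 (a+1) (b+1) c := fun h => Nat.cast_injective h
  apply this
  push_cast
  rw [mult3_cast, mult3_cast, mult3_cast, mult3_cast]
  have e1 : a+1+(b+1)+(c+1) = (a+b+c)+3 := by ring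
  have e2 : a+(b+1)+(c+1) = (a+b+c)+2 := by ring
  have e3 : a+1+b+(c+1) = (a+b+c)+2 := by ring
  have e4 : a+1+(b+1)+c = (a+b+c)+2 := by ring
  rw [e1, e2, e3, e4]
  simp only [Nat.factorial_succ]
  push_cast
  have ha := a.factorial_pos
  have hb := b.factorial_pos
  have hc := c.factorial_pos
  have hn := (a+b+c).factorial_pos
  field_simp
  ring

lemma mult3_right_zero (x y : ℕ) : mult3 x y 0 = (x+y).choose x := by
  rw [mult3_eq]; simp

lemma mult3_mid_zero (x z : ℕ) : mult3 x 0 z = (x+z).choose x := by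
  rw [mult3_eq]; simp

lemma mult3_left_zero (y z : ℕ) : mult3 0 y z = (y+z).choose y := by
  rw [mult3_eq]; simp

lemma mult3_pascal_c0 (k b : ℕ) :
    mult3 (k+1) (b+1) 0 = mult3 k (b+1) 0 + mult3 (k+1) b 0 := by
  rw [mult3_right_zero, mult3_right_zero, mult3_right_zero]
  have e : k+1+(b+1) = (k+(b+1))+1 := by ring
  rw [e, Nat.choose_succ_succ]
  have e2 : k+1+b = k+(b+1) := by ring
  rw [e2]

lemma mult3_pascal_b0 (k n : ℕ) :
    mult3 (k+1) 0 (n+1) = mult3 k 0 (n+1) + mult3 (k+1) 0 n := by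
  rw [mult3_mid_zero, mult3_mid_zero, mult3_mid_zero]
  have e : k+1+(n+1) = (k+(n+1))+1 := by ring
  rw [e, Nat.choose_succ_succ]
  have e2 : k+1+n = k+(n+1) := by ring
  rw [e2]

lemma mult3_pascal_k0 (b c : ℕ) :
    mult3 0 (b+1) (c+1) = mult3 0 (b+1) c + mult3 0 b (c+1) := by
  rw [mult3_left_zero, mult3_left_zero, mult3_left_zero]
  have e : b+1+(c+1) = (b+(c+1))+1 := by ring
  rw [e, Nat.choose_succ_succ]
  have e2 : b+1+c = b+(c+1) := by ring
  rw [e2, Nat.add_comm (Nat.choose _ b)]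

def T (k n b : ℕ) : ℕ := if 2*b ≤ n then mult3 k b (n - 2*b) else 0

lemma T_eq_zero {k n b : ℕ} (h : n < 2*b) : T k n b = 0 := if_neg (by omega)

lemma T_pascal1 (k n b : ℕ) :
    T (k+1) (n+2) (b+1) = T k (n+2) (b+1) + T (k+1) (n+1) (b+1) + T (k+1) n b := by
  rcases Nat.lt_trichotomy (2*b) n with h | h | h
  · -- interior: n ≥ 2b+1
    obtain ⟨m, rfl⟩ : ∃ m, n = 2*b+1+m := ⟨n-(2*b+1), by omega⟩
    unfold T
    rw [if_pos (by omega), if_pos (by omega), if_pos (by omega), if_pos (by omega)]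
    have e1 : 2*b+1+m+2 - 2*(b+1) = m+1 := by omega
    have e2 : 2*b+1+m+1 - 2*(b+1) = m := by omega
    have e3 : 2*b+1+m - 2*b = m+1 := by omega
    rw [e1, e2, e3]
    rw [mult3_pascal k b m]; ring
  · -- 2b = n
    subst h
    unfold T
    rw [if_pos (by omega), if_pos (by omega), if_neg (by omega), if_pos (by omega)]
    have e1 : 2*b+2 - 2*(b+1) = 0 := by omega
    have e3 : 2*b - 2*b = 0 := by omega
    rw [e1, e3, Nat.add_zero]
    exact mult3_pascal_c0 k b
  · unfold T
    rw [if_neg (by omega), if_neg (by omega), if_neg (by omega), if_neg (by omega)]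

lemma T_pascal1_zero (k n : ℕ) :
    T (k+1) (n+2) 0 = T k (n+2) 0 + T (k+1) (n+1) 0 := by
  unfold T
  rw [if_pos (by omega), if_pos (by omega), if_pos (by omega)]
  simpa using mult3_pascal_b0 k (n+1)

lemma T_pascal0 (n b : ℕ) :
    T 0 (n+2) (b+1) = T 0 (n+1) (b+1) + T 0 n b := by
  rcases Nat.lt_trichotomy (2*b) n with h | h | h
  · obtain ⟨m, rfl⟩ : ∃ m, n = 2*b+1+m := ⟨n-(2*b+1), by omega⟩
    unfold T
    rw [if_pos (by omega), if_pos (by omega), if_pos (by omega)]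
    have e1 : 2*b+1+m+2 - 2*(b+1) = m+1 := by omega
    have e2 : 2*b+1+m+1 - 2*(b+1) = m := by omega
    have e3 : 2*b+1+m - 2*b = m+1 := by omega
    rw [e1, e2, e3]
    exact mult3_pascal_k0 b m
  · subst h
    unfold T
    rw [if_pos (by omega), if_neg (by omega), if_pos (by omega)]
    have e1 : 2*b+2 - 2*(b+1) = 0 := by omega
    have e3 : 2*b - 2*b = 0 := by omega
    rw [e1, e3, Nat.zero_add]
    rw [mult3_left_zero, mult3_left_zero]
    simp
  · unfold T
    rw [if_neg (by omega), if_neg (by omega), if_neg (by omega)]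

lemma T_pascal0_zero (n : ℕ) : T 0 (n+2) 0 = T 0 (n+1) 0 := by
  unfold T
  rw [if_pos (by omega), if_pos (by omega)]
  rw [mult3_left_zero, mult3_left_zero]
  simp

/-- `P k n z = ∑_{b=0}^{⌊n/2⌋} multinomial(k+n-b; k, b, n-2b) z^b`. -/
def Ppoly (k n : ℕ) (z : ℚ) : ℚ :=
  ∑ b ∈ Finset.range (n / 2 + 1), (mult3 k b (n - 2 * b) : ℚ) * z ^ b

lemma Ppoly_eq_sumT (k n : ℕ) (z : ℚ) :
    Ppoly k n z = ∑ b ∈ Finset.range (n+1), (T k n b : ℚ) * z ^ b := by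
  unfold Ppoly
  rw [show (∑ b ∈ Finset.range (n / 2 + 1), (mult3 k b (n - 2 * b) : ℚ) * z ^ b)
      = ∑ b ∈ Finset.range (n / 2 + 1), (T k n b : ℚ) * z ^ b from
    Finset.sum_congr rfl (fun b hb => by
      rw [Finset.mem_range] at hb
      unfold T
      rw [if_pos (by omega)])]
  exact Finset.sum_subset
    (Finset.range_subset_range.2 (by omega))
    (fun x hx hx' => by
      rw [Finset.mem_range] at hx
      rw [Finset.mem_range, not_lt] at hx'
      rw [T_eq_zero (by omega)]
      simp)

lemma Ppoly_zero (k : ℕ) (z : ℚ) : Ppoly k 0 z = 1 := by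
  unfold Ppoly
  simp [mult3_mid_zero]

lemma Ppoly_one (k : ℕ) (z : ℚ) : Ppoly k 1 z = (k : ℚ) + 1 := by
  unfold Ppoly
  simp [mult3_mid_zero]

lemma Ppoly_rec1 (k n : ℕ) (z : ℚ) :
    Ppoly (k+1) (n+2) z = Ppoly k (n+2) z + Ppoly (k+1) (n+1) z + z * Ppoly (k+1) n z := by
  rw [Ppoly_eq_sumT, Ppoly_eq_sumT, Ppoly_eq_sumT, Ppoly_eq_sumT]
  -- pad the (n+1)-sum to range (n+3) and the n-sum to range (n+2)
  have pad2 : (∑ b ∈ Finset.range (n+2), (T (k+1) (n+1) b : ℚ) * z ^ b)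
      = ∑ b ∈ Finset.range (n+3), (T (k+1) (n+1) b : ℚ) * z ^ b := by
    rw [Finset.sum_range_succ (n := n+2), T_eq_zero (by omega)]
    simp
  have pad3 : (∑ b ∈ Finset.range (n+1), (T (k+1) n b : ℚ) * z ^ b)
      = ∑ b ∈ Finset.range (n+2), (T (k+1) n b : ℚ) * z ^ b := by
    rw [Finset.sum_range_succ (n := n+1), T_eq_zero (by omega)]
    simp
  rw [pad2, pad3]
  rw [Finset.sum_range_succ' (fun b => (T (k+1) (n+2) b : ℚ) * z ^ b) (n+2)]
  rw [Finset.sum_range_succ' (fun b => (T k (n+2) b : ℚ) * z ^ b) (n+2)]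
  rw [Finset.sum_range_succ' (fun b => (T (k+1) (n+1) b : ℚ) * z ^ b) (n+2)]
  rw [Finset.mul_sum]
  simp only [T_pascal1, T_pascal1_zero]
  push_cast
  rw [Finset.sum_congr rfl (fun b _ => by
    show ((T k (n+2) (b+1) : ℚ) + T (k+1) (n+1) (b+1) + T (k+1) n b) * z ^ (b+1)
        = (T k (n+2) (b+1) : ℚ) * z ^ (b+1) + (T (k+1) (n+1) (b+1) : ℚ) * z ^ (b+1)
          + (T (k+1) n b : ℚ) * z ^ (b+1)
    ring)]
  rw [Finset.sum_add_distrib, Finset.sum_add_distrib]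
  have : (∑ b ∈ Finset.range (n+2), z * ((T (k+1) n b : ℚ) * z ^ b))
      = ∑ b ∈ Finset.range (n+2), (T (k+1) n b : ℚ) * z ^ (b+1) := by
    exact Finset.sum_congr rfl (fun b _ => by ring)
  rw [this]
  push_cast
  ring

lemma Ppoly_rec0 (n : ℕ) (z : ℚ) :
    Ppoly 0 (n+2) z = Ppoly 0 (n+1) z + z * Ppoly 0 n z := by
  rw [Ppoly_eq_sumT, Ppoly_eq_sumT, Ppoly_eq_sumT]
  have pad2 : (∑ b ∈ Finset.range (n+2), (T 0 (n+1) b : ℚ) * z ^ b)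
      = ∑ b ∈ Finset.range (n+3), (T 0 (n+1) b : ℚ) * z ^ b := by
    rw [Finset.sum_range_succ (n := n+2), T_eq_zero (by omega)]
    simp
  have pad3 : (∑ b ∈ Finset.range (n+1), (T 0 n b : ℚ) * z ^ b)
      = ∑ b ∈ Finset.range (n+2), (T 0 n b : ℚ) * z ^ b := by
    rw [Finset.sum_range_succ (n := n+1), T_eq_zero (by omega)]
    simp
  rw [pad2, pad3]
  rw [Finset.sum_range_succ' (fun b => (T 0 (n+2) b : ℚ) * z ^ b) (n+2)]
  rw [Finset.sum_range_succ' (fun b => (T 0 (n+1) b : ℚ) * z ^ b) (n+2)]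
  rw [Finset.mul_sum]
  simp only [T_pascal0, T_pascal0_zero]
  push_cast
  rw [Finset.sum_congr rfl (fun b _ => by
    show ((T 0 (n+1) (b+1) : ℚ) + T 0 n b) * z ^ (b+1)
        = (T 0 (n+1) (b+1) : ℚ) * z ^ (b+1) + (T 0 n b : ℚ) * z ^ (b+1)
    ring)]
  rw [Finset.sum_add_distrib]
  have : (∑ b ∈ Finset.range (n+2), z * ((T 0 n b : ℚ) * z ^ b))
      = ∑ b ∈ Finset.range (n+2), (T 0 n b : ℚ) * z ^ (b+1) := by
    exact Finset.sum_congr rfl (fun b _ => by ring)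
  rw [this]
  ring

lemma choose_id (m k : ℕ) :
    (m+2).choose (2*k+3) + m.choose (2*k+3)
      = m.choose (2*k+1) + 2 * (m+1).choose (2*k+3) := by
  have p1 : (m+2).choose (2*k+3) = (m+1).choose (2*k+2) + (m+1).choose (2*k+3) :=
    Nat.choose_succ_succ (m+1) (2*k+2)
  have p2 : (m+1).choose (2*k+2) = m.choose (2*k+1) + m.choose (2*k+2) :=
    Nat.choose_succ_succ m (2*k+1)
  have p3 : (m+1).choose (2*k+3) = m.choose (2*k+2) + m.choose (2*k+3) :=
    Nat.choose_succ_succ m (2*k+2)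
  omega

lemma key : ∀ n k : ℕ, Ppoly k n (-1/4) = ((n + 2*k + 1).choose (2*k+1) : ℚ) / 2 ^ n := by
  intro n
  induction n using Nat.strong_induction_on with
  | _ n ih =>
    match n with
    | 0 =>
      intro k
      rw [Ppoly_zero]
      simp
    | 1 =>
      intro k
      rw [Ppoly_one]
      have e : 1 + 2*k + 1 = 2*k + 2 := by omega
      rw [e]
      have : (2*k+2).choose (2*k+1) = 2*k+2 := by
        rw [← Nat.choose_symm (show 2*k+1 ≤ 2*k+2 by omega),
            show 2*k+2 - (2*k+1) = 1 by omega, Nat.choose_one_right]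
      rw [this]
      push_cast
      ring
    | (m+2) =>
      intro k
      induction k with
      | zero =>
        rw [Ppoly_rec0, ih (m+1) (by omega) 0, ih m (by omega) 0]
        simp only [Nat.mul_zero, Nat.add_zero, Nat.zero_add, Nat.choose_one_right]
        push_cast
        have h2 : (2:ℚ) ^ m ≠ 0 := by positivity
        field_simp
        ring
      | succ k ihk =>
        rw [Ppoly_rec1, ihk, ih (m+1) (by omega) (k+1), ih m (by omega) (k+1)]
        have e1 : m + 2 + 2*(k+1) + 1 = (m + 2*k + 3) + 2 := by omega
        have e2 : m + 2*k + 1 + 1 = (m + 2*k + 3) - 1 := by omega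
        have e3 : m + 1 + 2*(k+1) + 1 = (m + 2*k + 3) + 1 := by omega
        have e4 : m + (2*(k+1) + 1) = m + 2*k + 3 := by omega
        have e5 : 2*(k+1)+1 = 2*k+3 := by omega
        have hc := choose_id (m + 2*k + 3) k
        have hcq := congrArg (Nat.cast : ℕ → ℚ) hc
        push_cast at hcq
        rw [show m + 2 + 2*(k+1) + 1 = m + 2*k + 3 + 2 by omega,
            show m + 1 + 2*(k+1) + 1 = m + 2*k + 3 + 1 by omega,
            show m + 2*(k+1) + 1 = m + 2*k + 3 by omega,
            show m + 2 + 2*k + 1 = m + 2*k + 3 by omega,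
            e5]
        linear_combination -hcq / 2 ^ (m+2)

lemma prod_eq (d : ℕ) :
    (3/4 : ℚ) ^ d * ∏ k ∈ Finset.range d,
        (9 * ((k : ℚ) + 1) ^ 2 - 1) / (((k : ℚ) + 1) * (2 * ((k : ℚ) + 1) + 1))
      = ((3*d+1).choose (2*d+1) : ℚ) / 2 ^ d := by
  induction d with
  | zero => simp
  | succ d ih =>
    rw [Finset.prod_range_succ, pow_succ, show (3/4:ℚ)^d * (3/4) *
      ((∏ k ∈ Finset.range d, (9 * ((k : ℚ) + 1) ^ 2 - 1) / (((k : ℚ) + 1) * (2 * ((k : ℚ) + 1) + 1))) *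
        ((9 * ((d : ℚ) + 1) ^ 2 - 1) / (((d : ℚ) + 1) * (2 * ((d : ℚ) + 1) + 1))))
      = ((3/4:ℚ)^d * ∏ k ∈ Finset.range d, (9 * ((k : ℚ) + 1) ^ 2 - 1) / (((k : ℚ) + 1) * (2 * ((k : ℚ) + 1) + 1))) *
        ((3/4) * ((9 * ((d : ℚ) + 1) ^ 2 - 1) / (((d : ℚ) + 1) * (2 * ((d : ℚ) + 1) + 1)))) by ring, ih]
    have h1 : ((3*(d+1)+1).choose (2*(d+1)+1) : ℚ)
        = ((3*d+4).factorial : ℚ) / ((2*d+3).factorial * (d+1).factorial) := by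
      rw [show 3*(d+1)+1 = 3*d+4 by ring, show 2*(d+1)+1 = 2*d+3 by ring,
        Nat.cast_choose ℚ (show 2*d+3 ≤ 3*d+4 by omega), show 3*d+4 - (2*d+3) = d+1 by omega]
    have h2 : ((3*d+1).choose (2*d+1) : ℚ)
        = ((3*d+1).factorial : ℚ) / ((2*d+1).factorial * d.factorial) := by
      rw [Nat.cast_choose ℚ (show 2*d+1 ≤ 3*d+1 by omega), show 3*d+1 - (2*d+1) = d by omega]
    have f1 : ((3*d+4).factorial : ℚ)
        = (3*(d:ℚ)+4)*(3*(d:ℚ)+3)*(3*(d:ℚ)+2)*((3*d+1).factorial : ℚ) := by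
      rw [show 3*d+4 = (3*d+3)+1 by ring, Nat.factorial_succ,
          show 3*d+3 = (3*d+2)+1 by ring, Nat.factorial_succ,
          show 3*d+2 = (3*d+1)+1 by ring, Nat.factorial_succ]
      push_cast; ring
    have f2 : ((2*d+3).factorial : ℚ)
        = (2*(d:ℚ)+3)*(2*(d:ℚ)+2)*((2*d+1).factorial : ℚ) := by
      rw [show 2*d+3 = (2*d+2)+1 by ring, Nat.factorial_succ,
          show 2*d+2 = (2*d+1)+1 by ring, Nat.factorial_succ]
      push_cast; ring
    have f3 : ((d+1).factorial : ℚ) = ((d:ℚ)+1)*(d.factorial : ℚ) := by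
      rw [Nat.factorial_succ]; push_cast; ring
    rw [h1, h2, f1, f2, f3]
    have n1 : ((3*d+1).factorial : ℚ) ≠ 0 := by positivity
    have n2 : ((2*d+1).factorial : ℚ) ≠ 0 := by positivity
    have n3 : ((d).factorial : ℚ) ≠ 0 := by positivity
    have n4 : ((d:ℚ)+1) ≠ 0 := by positivity
    have n5 : (2*(d:ℚ)+3) ≠ 0 := by positivity
    have n6 : (2:ℚ)^d ≠ 0 := by positivity
    field_simp
    ring

theorem stmt1 (d : ℕ) :
    Ppoly d d (-1/4) =
        (3/4) ^ d * ∏ k ∈ Finset.range d,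
          (9 * ((k : ℚ) + 1) ^ 2 - 1) / (((k : ℚ) + 1) * (2 * ((k : ℚ) + 1) + 1)) ∧
      Ppoly d d (-1/4) ≠ 0 := by
  have hk := key d d
  rw [show d + 2*d + 1 = 3*d+1 by omega] at hk
  constructor
  · rw [hk, prod_eq]
  · rw [hk]
    have hpos : 0 < (3*d+1).choose (2*d+1) := Nat.choose_pos (by omega)
    have : (0:ℚ) < ((3*d+1).choose (2*d+1) : ℚ) := by exact_mod_cast hpos
    positivity
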